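/- Let x : ℤ → ℝ be a sequence and let (φ_0, φ_1, θ) and (ψ_0, ψ_1, η) be two triples of real numbers. Define ε : ℤ → ℝ by ε_t = 0 for t ≤ 0 and ε_t = x_t − φ_0 − φ_1 x_{t−1} + θ ε_{t−1} for t ≥ 1, and define ε̂ : ℤ → ℝ by ε̂_t = 0 for t ≤ 0 and ε̂_t = x_t − ψ_0 − ψ_1 x_{t−1} + η ε̂_{t−1} for t ≥ 1. Then for every t ≥ 1, ε_t − ε̂_t = (ψ_0 − φ_0) Σ_{j=0}^{t−1} η^j + (ψ_1 − φ_1) Σ_{j=0}^{t−1} η^j x_{t−1−j} + (θ − η) Σ_{j=0}^{t−1} η^j ε_{t−1−j}. -/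

import Mathlib

/-- Identity (c) in the proof of Proposition 1, Part 3: for an ARMA(1,1) model, the
difference between residuals computed at the true parameters `(φ0, φ1, θ)` and at
estimated parameters `(ψ0, ψ1, η)` (both with zero initial residuals) admits an exact
expansion as geometric-weighted sums. -/
theorem arma11_residual_difference
    (x : ℤ → ℝ) (φ0 φ1 θ ψ0 ψ1 η : ℝ) (ε εh : ℤ → ℝ)
    (hε0 : ∀ t : ℤ, t ≤ 0 → ε t = 0)
    (hε : ∀ t : ℤ, 1 ≤ t → ε t = x t - φ0 - φ1 * x (t - 1) + θ * ε (t - 1))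
    (hεh0 : ∀ t : ℤ, t ≤ 0 → εh t = 0)
    (hεh : ∀ t : ℤ, 1 ≤ t → εh t = x t - ψ0 - ψ1 * x (t - 1) + η * εh (t - 1)) :
    ∀ t : ℤ, 1 ≤ t →
      ε t - εh t
        = (ψ0 - φ0) * ∑ j ∈ Finset.range t.toNat, η ^ j
          + (ψ1 - φ1) * ∑ j ∈ Finset.range t.toNat, η ^ j * x (t - 1 - (j : ℤ))
          + (θ - η) * ∑ j ∈ Finset.range t.toNat, η ^ j * ε (t - 1 - (j : ℤ)) := by
  have key : ∀ n : ℕ,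
      ε ((n : ℤ) + 1) - εh ((n : ℤ) + 1)
        = (ψ0 - φ0) * ∑ j ∈ Finset.range ((n : ℤ) + 1).toNat, η ^ j
          + (ψ1 - φ1) * ∑ j ∈ Finset.range ((n : ℤ) + 1).toNat,
              η ^ j * x ((n : ℤ) + 1 - 1 - (j : ℤ))
          + (θ - η) * ∑ j ∈ Finset.range ((n : ℤ) + 1).toNat,
              η ^ j * ε ((n : ℤ) + 1 - 1 - (j : ℤ)) := by
    intro n
    induction n with
    | zero =>
        have h1 : ((0 : ℕ) : ℤ) + 1 = 1 := by norm_num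
        have h2 : (1 : ℤ) - 1 = 0 := by norm_num
        rw [h1]
        simp only [Int.toNat_one, Finset.sum_range_one, pow_zero, Nat.cast_zero, sub_zero,
          one_mul, h2]
        rw [hε 1 le_rfl, hεh 1 le_rfl, h2, hε0 0 le_rfl, hεh0 0 le_rfl]
        ring
    | succ n ih =>
        set t : ℤ := (n : ℤ) + 1 with htdef
        have hcast : ((n + 1 : ℕ) : ℤ) + 1 = t + 1 := by push_cast; ring
        rw [hcast]
        have htn : (t + 1).toNat = t.toNat + 1 := by omega
        have hstep : ε (t + 1) - εh (t + 1)
            = (ψ0 - φ0) + (ψ1 - φ1) * x t + (θ - η) * ε t + η * (ε t - εh t) := by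
          rw [hε (t + 1) (by omega), hεh (t + 1) (by omega)]
          simp only [add_sub_cancel_right]
          ring
        have hidx : ∀ j : ℕ, t + 1 - 1 - ((j : ℤ) + 1) = t - 1 - (j : ℤ) := by
          intro j; ring
        have S1 : ∑ j ∈ Finset.range (t + 1).toNat, η ^ j
            = 1 + η * ∑ j ∈ Finset.range t.toNat, η ^ j := by
          rw [htn, Finset.sum_range_succ', Finset.mul_sum, add_comm (1 : ℝ)]
          congr 1
          exact Finset.sum_congr rfl fun j _ => by ring
        have S2 : ∑ j ∈ Finset.range (t + 1).toNat, η ^ j * x (t + 1 - 1 - (j : ℤ))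
            = x t + η * ∑ j ∈ Finset.range t.toNat, η ^ j * x (t - 1 - (j : ℤ)) := by
          rw [htn, Finset.sum_range_succ', Finset.mul_sum, add_comm (x t)]
          congr 1
          · refine Finset.sum_congr rfl fun j _ => ?_
            push_cast
            rw [hidx j]
            ring
          · norm_num
        have S3 : ∑ j ∈ Finset.range (t + 1).toNat, η ^ j * ε (t + 1 - 1 - (j : ℤ))
            = ε t + η * ∑ j ∈ Finset.range t.toNat, η ^ j * ε (t - 1 - (j : ℤ)) := by
          rw [htn, Finset.sum_range_succ', Finset.mul_sum, add_comm (ε t)]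
          congr 1
          · refine Finset.sum_congr rfl fun j _ => ?_
            push_cast
            rw [hidx j]
            ring
          · norm_num
        rw [hstep, S1, S2, S3, ih]
        ring
  intro t ht
  obtain ⟨n, rfl⟩ : ∃ n : ℕ, t = (n : ℤ) + 1 := ⟨(t - 1).toNat, by omega⟩
  exact key n
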